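/- If a connected simple graph G (finite or infinite) has a finite resolving set, then G is locally finite, i.e., every vertex of G has finite degree. -/
import Mathlib


/-- `W` is a resolving set of `G`. -/
def IsResolving {V : Type*} (G : SimpleGraph V) (W : Set V) : Prop :=
  ∀ x y : V, x ≠ y → ∃ w ∈ W, G.dist w x ≠ G.dist w y

/-- If a connected graph `G` has a finite resolving set, then `G` is locally finite:
every vertex has finite degree (finitely many neighbors). -/
theorem locallyFinite_of_finite_resolvingSet {V : Type*} (G : SimpleGraph V)
    (hG : G.Connected) (W : Set V) (hWfin : W.Finite) (hW : IsResolving G W) :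
    ∀ v : V, (G.neighborSet v).Finite := by
  intro v
  haveI : Finite ↥W := hWfin
  set f : V → (↥W → ℕ) := fun u w => G.dist (w : V) u with hf
  have hfin : (Set.pi Set.univ fun w : ↥W => Set.Iic (G.dist (w : V) v + 1)).Finite :=
    Set.Finite.pi fun w => Set.finite_Iic _
  apply Set.Finite.of_finite_image (f := f)
  · apply hfin.subset
    rintro g ⟨u, hu, rfl⟩
    intro w _
    have hadj : G.dist v u = 1 := SimpleGraph.dist_eq_one_iff_adj.mpr hu
    have := hG.dist_triangle (u := (w : V)) (v := v) (w := u)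
    simp only [f, Set.mem_Iic]
    omega
  · intro a ha b hb hab
    by_contra hne
    obtain ⟨w, hwW, hwd⟩ := hW a b hne
    exact hwd (congrFun hab ⟨w, hwW⟩)
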